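/- arXiv:1609.09530 — 2 statements merged into one kernel-verified Lean document; each statement's English description precedes it below -/
import Mathlib

section
/- Under the hypotheses of the previous statement, the sharper bound E(x^k) - E(x^{k+1}) ≥ max(1/λ - L/2 - α/(2‖x^{k+1}‖₂), 1/(2λ) - L/2)·‖x^{k+1} - x^k‖₂² holds for the FBS iteration when x^{k+1} ≠ 0. -/
open Finset Filter Set
open scoped RealInnerProductSpace

noncomputable def norm1 {N : ℕ} (x : EuclideanSpace ℝ (Fin N)) : ℝ := ∑ i, |x i|

noncomputable def normInf {N : ℕ} (x : EuclideanSpace ℝ (Fin N)) : ℝ := ⨆ i, |x i|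

lemma norm_upper {N : ℕ} (v w : EuclideanSpace ℝ (Fin N)) (hv : v ≠ 0) :
    ‖w‖ ≤ ‖v‖ + ⟪v, w - v⟫ / ‖v‖ + ‖w - v‖ ^ 2 / (2 * ‖v‖) := by
  have hv' : (0:ℝ) < ‖v‖ := norm_pos_iff.mpr hv
  have h1 : ‖w - v‖ ^ 2 = ‖w‖ ^ 2 - 2 * ⟪w, v⟫ + ‖v‖ ^ 2 := norm_sub_sq_real w v
  have h2 : ⟪v, w - v⟫ = ⟪w, v⟫ - ‖v‖ ^ 2 := by
    rw [inner_sub_right, real_inner_comm, real_inner_self_eq_norm_sq]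
  rw [h2, h1]
  have key : ‖w‖ * (2 * ‖v‖) ≤
      (‖v‖ + (⟪w, v⟫ - ‖v‖ ^ 2) / ‖v‖ + (‖w‖ ^ 2 - 2 * ⟪w, v⟫ + ‖v‖ ^ 2) / (2 * ‖v‖)) *
        (2 * ‖v‖) := by
    have e : (‖v‖ + (⟪w, v⟫ - ‖v‖ ^ 2) / ‖v‖ + (‖w‖ ^ 2 - 2 * ⟪w, v⟫ + ‖v‖ ^ 2) / (2 * ‖v‖)) *
        (2 * ‖v‖) = 2 * ‖v‖ ^ 2 + 2 * (⟪w, v⟫ - ‖v‖ ^ 2) + (‖w‖ ^ 2 - 2 * ⟪w, v⟫ + ‖v‖ ^ 2) := by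
      field_simp
    rw [e]; nlinarith [sq_nonneg (‖v‖ - ‖w‖)]
  exact le_of_mul_le_mul_right key (by positivity)

lemma norm_lower {N : ℕ} (v w : EuclideanSpace ℝ (Fin N)) (hv : v ≠ 0) :
    ‖v‖ + ⟪v, w - v⟫ / ‖v‖ ≤ ‖w‖ := by
  have hv' : (0:ℝ) < ‖v‖ := norm_pos_iff.mpr hv
  have h2 : ⟪v, w - v⟫ = ⟪v, w⟫ - ‖v‖ ^ 2 := by
    rw [inner_sub_right, real_inner_self_eq_norm_sq]
  have hcs : ⟪v, w⟫ ≤ ‖v‖ * ‖w‖ := real_inner_le_norm v w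
  rw [h2]
  have : (⟪v, w⟫ - ‖v‖ ^ 2) / ‖v‖ ≤ ‖w‖ - ‖v‖ := by
    rw [div_le_iff₀ hv']; nlinarith
  linarith

lemma norm1_convex {N : ℕ} (u v : EuclideanSpace ℝ (Fin N)) (t : ℝ) (ht0 : 0 ≤ t) (ht1 : t ≤ 1) :
    norm1 ((1 - t) • u + t • v) ≤ (1 - t) * norm1 u + t * norm1 v := by
  simp only [norm1, Finset.mul_sum]
  rw [← Finset.sum_add_distrib]
  apply Finset.sum_le_sum
  intro i _
  have : ((1 - t) • u + t • v) i = (1 - t) * u i + t * v i := rfl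
  rw [this]
  calc |(1 - t) * u i + t * v i| ≤ |(1 - t) * u i| + |t * v i| := abs_add_le _ _
    _ = (1 - t) * |u i| + t * |v i| := by
        rw [abs_mul, abs_mul, abs_of_nonneg (by linarith), abs_of_nonneg ht0]

lemma descent {N : ℕ} (L : ℝ)
    (l : EuclideanSpace ℝ (Fin N) → ℝ)
    (g : EuclideanSpace ℝ (Fin N) → EuclideanSpace ℝ (Fin N))
    (hg : ∀ z, HasGradientAt l (g z) z)
    (hLip : ∀ z w, ‖g z - g w‖ ≤ L * ‖z - w‖)
    (u d : EuclideanSpace ℝ (Fin N)) :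
    l (u + d) ≤ l u + ⟪g u, d⟫ + L / 2 * ‖d‖ ^ 2 := by
  set ψ : ℝ → ℝ := fun t => l (u + t • d) - t * ⟪g u, d⟫ - L * t ^ 2 / 2 * ‖d‖ ^ 2 with hψdef
  have hline : ∀ t : ℝ, HasDerivAt (fun s : ℝ => u + s • d) d t := by
    intro t
    simpa using ((hasDerivAt_id t).smul_const d).const_add u
  have hcomp : ∀ t : ℝ, HasDerivAt (fun s : ℝ => l (u + s • d)) ⟪g (u + t • d), d⟫ t := by
    intro t
    have h1 := (hg (u + t • d)).hasFDerivAt.comp_hasDerivAt t (hline t)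
    simp at h1; exact h1
  have hψ' : ∀ t : ℝ, HasDerivAt ψ (⟪g (u + t • d), d⟫ - ⟪g u, d⟫ - L * t * ‖d‖ ^ 2) t := by
    intro t
    have h2 : HasDerivAt (fun s : ℝ => s * ⟪g u, d⟫) ⟪g u, d⟫ t := by
      simpa using (hasDerivAt_id t).mul_const (⟪g u, d⟫ : ℝ)
    have h3 : HasDerivAt (fun s : ℝ => L * s ^ 2 / 2 * ‖d‖ ^ 2) (L * t * ‖d‖ ^ 2) t := by
      have h := (((hasDerivAt_pow 2 t).const_mul L).div_const 2).mul_const (‖d‖ ^ 2 : ℝ)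
      refine h.congr_deriv ?_
      norm_num
      left; ring
    exact ((hcomp t).sub h2).sub h3
  have hanti : AntitoneOn ψ (Set.Icc (0:ℝ) 1) := by
    apply antitoneOn_of_deriv_nonpos (convex_Icc 0 1)
    · exact Continuous.continuousOn (by
        exact continuous_iff_continuousAt.mpr fun t => (hψ' t).differentiableAt.continuousAt)
    · exact fun t _ => (hψ' t).differentiableAt.differentiableWithinAt
    · intro t ht
      rw [interior_Icc] at ht
      rw [(hψ' t).deriv]
      have e1 : ⟪g (u + t • d), d⟫ - ⟪g u, d⟫ = ⟪g (u + t • d) - g u, d⟫ := by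
        rw [inner_sub_left]
      have e2 : ⟪g (u + t • d) - g u, d⟫ ≤ ‖g (u + t • d) - g u‖ * ‖d‖ :=
        real_inner_le_norm _ _
      have e3 : ‖g (u + t • d) - g u‖ ≤ L * (t * ‖d‖) := by
        have := hLip (u + t • d) u
        simpa [norm_smul, abs_of_pos ht.1] using this
      have hd : (0:ℝ) ≤ ‖d‖ := norm_nonneg d
      nlinarith [norm_nonneg (g (u + t • d) - g u)]
  have h01 : ψ 1 ≤ ψ 0 := hanti (Set.left_mem_Icc.mpr zero_le_one)
    (Set.right_mem_Icc.mpr zero_le_one) zero_le_one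
  simp only [hψdef, one_smul, zero_smul, add_zero, one_mul, one_pow, zero_mul, sub_zero,
    zero_pow, mul_zero, zero_div] at h01
  linarith

noncomputable def Fobj {N : ℕ} (a lam : ℝ) (y x : EuclideanSpace ℝ (Fin N)) : ℝ :=
  norm1 x - a * ‖x‖ + 1 / (2 * lam) * ‖x - y‖ ^ 2

set_option maxHeartbeats 1000000 in
lemma prox_gap {N : ℕ} (a lam : ℝ) (ha : 0 ≤ a) (hlam : 0 < lam)
    (y x xs : EuclideanSpace ℝ (Fin N)) (hxs : xs ≠ 0)
    (hmin : IsMinOn (Fobj a lam y) Set.univ xs) :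
    Fobj a lam y x - Fobj a lam y xs ≥ (1 / (2 * lam) - a / (2 * ‖xs‖)) * ‖x - xs‖ ^ 2 := by
  have hn : (0:ℝ) < ‖xs‖ := norm_pos_iff.mpr hxs
  set d : EuclideanSpace ℝ (Fin N) := x - xs with hd
  set u : EuclideanSpace ℝ (Fin N) := xs - y with hu
  set n : ℝ := ‖xs‖ with hnn
  set D : ℝ := ‖d‖ ^ 2 with hD
  set ip : ℝ := ⟪xs, d⟫ with hip
  set iu : ℝ := ⟪u, d⟫ with hiu
  have hD0 : 0 ≤ D := sq_nonneg _
  -- expansion of ‖x - y‖²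
  have hxy : x - y = u + d := by rw [hu, hd]; abel
  have e1 : ‖x - y‖ ^ 2 = ‖u‖ ^ 2 + 2 * iu + D := by
    rw [hxy, norm_add_sq_real]
  -- key per-t inequality
  set A : ℝ := norm1 x - norm1 xs - a * ip / n + iu / lam with hA
  have hAt : ∀ t : ℝ, 0 < t → t < 1 → 0 ≤ A + t * (D / (2 * lam)) := by
    intro t ht0 ht1
    have hcomb : xs + t • d = (1 - t) • xs + t • x := by
      rw [hd]; module
    have n1 : norm1 (xs + t • d) ≤ (1 - t) * norm1 xs + t * norm1 x := by
      rw [hcomb]; exact norm1_convex xs x t ht0.le ht1.le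
    have nl : n + t * ip / n ≤ ‖xs + t • d‖ := by
      have := norm_lower xs (xs + t • d) hxs
      rw [add_sub_cancel_left, real_inner_smul_right] at this
      rw [hnn, hip]
      calc ‖xs‖ + t * ⟪xs, d⟫ / ‖xs‖ = ‖xs‖ + (t * ⟪xs, d⟫) / ‖xs‖ := by ring
        _ ≤ ‖xs + t • d‖ := this
    have e2 : ‖(xs + t • d) - y‖ ^ 2 = ‖u‖ ^ 2 + 2 * (t * iu) + t ^ 2 * D := by
      have hxty : (xs + t • d) - y = u + t • d := by rw [hu]; abel
      rw [hxty, norm_add_sq_real, real_inner_smul_right, norm_smul]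
      rw [hiu, hD]
      rw [Real.norm_eq_abs, abs_of_pos ht0]
      ring
    have hmin' : Fobj a lam y xs ≤ Fobj a lam y (xs + t • d) :=
      isMinOn_iff.mp hmin _ (Set.mem_univ _)
    simp only [Fobj] at hmin'
    rw [e2] at hmin'
    have hub : -(a * ‖xs + t • d‖) ≤ -(a * n) - a * (t * ip / n) := by
      have := mul_le_mul_of_nonneg_left nl ha
      have e : a * (n + t * ip / n) = a * n + a * (t * ip / n) := by ring
      linarith [this, e ▸ this]
    have step : norm1 xs - a * n + 1 / (2 * lam) * ‖u‖ ^ 2 ≤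
        (1 - t) * norm1 xs + t * norm1 x - a * n - a * (t * ip / n) +
          1 / (2 * lam) * (‖u‖ ^ 2 + 2 * (t * iu) + t ^ 2 * D) := by
      have hxsy : xs - y = u := hu.symm
      rw [hxsy] at hmin'
      nlinarith [hmin', n1, hub]
    have key : 0 ≤ t * (A + t * (D / (2 * lam))) := by
      have hlam' : lam ≠ 0 := ne_of_gt hlam
      have expand : t * (A + t * (D / (2 * lam))) =
          (1 - t) * norm1 xs + t * norm1 x - a * n - a * (t * ip / n) +
            1 / (2 * lam) * (‖u‖ ^ 2 + 2 * (t * iu) + t ^ 2 * D) -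
            (norm1 xs - a * n + 1 / (2 * lam) * ‖u‖ ^ 2) := by
        rw [hA]; field_simp; ring
      rw [expand]; linarith
    nlinarith [key, ht0, mul_pos ht0 ht0]
  have hA0 : 0 ≤ A := by
    by_contra h
    push_neg at h
    rcases eq_or_lt_of_le hD0 with hDe | hDp
    · have := hAt (1/2) (by norm_num) (by norm_num)
      rw [← hDe] at this
      simp at this
      linarith
    · set t : ℝ := min (1/2) ((-A) * lam / D) with htdef
      have ht0 : 0 < t := lt_min (by norm_num) (div_pos (mul_pos (neg_pos.mpr h) hlam) hDp)
      have ht1 : t < 1 := lt_of_le_of_lt (min_le_left _ _) (by norm_num)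
      have := hAt t ht0 ht1
      have hle : t ≤ (-A) * lam / D := min_le_right _ _
      have hc : t * (D / (2 * lam)) ≤ -A / 2 := by
        have h1 : ((-A) * lam / D) * (D / (2 * lam)) = -A / 2 := by
          field_simp
        calc t * (D / (2 * lam)) ≤ ((-A) * lam / D) * (D / (2 * lam)) := by
              apply mul_le_mul_of_nonneg_right hle (by positivity)
          _ = -A / 2 := h1
      clear_value A D t
      linarith
  -- conclude
  have hupper : ‖x‖ ≤ n + ip / n + D / (2 * n) := norm_upper xs x hxs
  have hgap : Fobj a lam y x - Fobj a lam y xs =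
      (norm1 x - norm1 xs) - a * (‖x‖ - n) + iu / lam + D / (2 * lam) := by
    simp only [Fobj]
    rw [e1, ← hu, ← hnn]
    field_simp
    ring
  clear_value d u n D ip iu A
  rw [hgap, ge_iff_le]
  have h5 : a * ‖x‖ ≤ a * n + a * (ip / n) + a * (D / (2 * n)) := by
    have := mul_le_mul_of_nonneg_left hupper ha
    nlinarith [this]
  have h6 : a * (ip / n) = a * ip / n := by ring
  have h7 : (1 / (2 * lam) - a / (2 * n)) * D = D / (2 * lam) - a * (D / (2 * n)) := by
    field_simp
  rw [h7]
  linarith [hA0, hA, h5, h6 ▸ h5]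

set_option maxHeartbeats 1000000 in
theorem stmt9 {N : ℕ} (a lam L : ℝ) (ha : 0 ≤ a) (hL : 0 < L)
    (hlam : 0 < lam) (hlamL : lam < 1 / L)
    (l : EuclideanSpace ℝ (Fin N) → ℝ)
    (g : EuclideanSpace ℝ (Fin N) → EuclideanSpace ℝ (Fin N))
    (hg : ∀ z, HasGradientAt l (g z) z)
    (hLip : ∀ z w, ‖g z - g w‖ ≤ L * ‖z - w‖)
    (xk xk1 : EuclideanSpace ℝ (Fin N)) (hxk1 : xk1 ≠ 0)
    (hstep : IsMinOn (Fobj a lam (xk - lam • g xk)) Set.univ xk1) :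
    (norm1 xk - a * ‖xk‖ + l xk) - (norm1 xk1 - a * ‖xk1‖ + l xk1) ≥
      max (1 / lam - L / 2 - a / (2 * ‖xk1‖)) (1 / (2 * lam) - L / 2) *
        ‖xk1 - xk‖ ^ 2 := by
  set y : EuclideanSpace ℝ (Fin N) := xk - lam • g xk with hydef
  set d : EuclideanSpace ℝ (Fin N) := xk1 - xk with hddef
  set D : ℝ := ‖d‖ ^ 2 with hDdef
  have hy : xk - y = lam • g xk := by rw [hydef]; abel
  have e1 : ‖xk - y‖ ^ 2 = lam ^ 2 * ‖g xk‖ ^ 2 := by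
    rw [hy, norm_smul, Real.norm_eq_abs, abs_of_pos hlam]; ring
  have hy1 : xk1 - y = d + lam • g xk := by rw [hydef, hddef]; abel
  have e2 : ‖xk1 - y‖ ^ 2 = D + 2 * (lam * ⟪d, g xk⟫) + lam ^ 2 * ‖g xk‖ ^ 2 := by
    rw [hy1, norm_add_sq_real, real_inner_smul_right, norm_smul, Real.norm_eq_abs,
      abs_of_pos hlam, hDdef]; ring
  have hFexp : Fobj a lam y xk - Fobj a lam y xk1 =
      (norm1 xk - a * ‖xk‖) - (norm1 xk1 - a * ‖xk1‖) - 1 / (2 * lam) * D - ⟪d, g xk⟫ := by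
    simp only [Fobj]
    rw [e1, e2]
    field_simp
    ring
  have hprox := prox_gap a lam ha hlam y xk xk1 hxk1 hstep
  have hsym : ‖xk - xk1‖ ^ 2 = D := by rw [hDdef, hddef, norm_sub_rev]
  rw [hsym] at hprox
  have hdes : l xk1 ≤ l xk + ⟪g xk, d⟫ + L / 2 * D := by
    have := descent L l g hg hLip xk d
    rw [hddef] at this ⊢
    rw [add_sub_cancel] at this
    exact this
  have hmin0 : Fobj a lam y xk1 ≤ Fobj a lam y xk := isMinOn_iff.mp hstep xk (Set.mem_univ _)
  have hic : ⟪d, g xk⟫ = ⟪g xk, d⟫ := real_inner_comm _ _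
  rw [ge_iff_le, max_mul_of_nonneg _ _ (sq_nonneg ‖xk1 - xk‖)]
  have hDg : ‖xk1 - xk‖ ^ 2 = D := rfl
  rw [hDg]
  clear_value d D
  have hx1 : (1 / (2 * lam) - a / (2 * ‖xk1‖)) * D = 1 / (2 * lam) * D - a / (2 * ‖xk1‖) * D := by
    ring
  have hx2 : (1 / lam - L / 2 - a / (2 * ‖xk1‖)) * D =
      1 / (2 * lam) * D + 1 / (2 * lam) * D - L / 2 * D - a / (2 * ‖xk1‖) * D := by
    field_simp; ring
  apply max_le
  · linarith [hFexp, hprox, hdes, hic, hx1, hx2]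
  · linarith [hFexp, hprox, hdes, hic, hmin0]
end

section
/- For the ADMM scheme on min r(x) + l(y) s.t. x = y, with l having L-Lipschitz gradient, the augmented Lagrangian satisfies L_δ(x^{k+1}, y^{k+1}, u^{k+1}) - L_δ(x^{k+1}, y^k, u^k) ≤ (3L/2 + L²/δ - δ/2)‖y^{k+1} - y^k‖₂²; if moreover l is convex, the bound improves to (L²/δ - δ/2)‖y^{k+1} - y^k‖₂². -/
open Finset Filter Set
open scoped RealInnerProductSpace

private lemma line_deriv {N : ℕ} (l : EuclideanSpace ℝ (Fin N) → ℝ)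
    (g : EuclideanSpace ℝ (Fin N) → EuclideanSpace ℝ (Fin N))
    (hg : ∀ z, HasGradientAt l (g z) z) (a d : EuclideanSpace ℝ (Fin N)) (t : ℝ) :
    HasDerivAt (fun s : ℝ => l (a + s • d)) (inner ℝ (g (a + t • d)) d : ℝ) t := by
  have hc : HasDerivAt (fun s : ℝ => a + s • d) d t := by
    simpa using ((hasDerivAt_id t).smul_const d).const_add a
  have h := (hg (a + t • d)).hasFDerivAt.comp_hasDerivAt t hc
  simp at h; exact h

private lemma descent_lemma {N : ℕ} (L : ℝ) (hL : 0 ≤ L)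
    (l : EuclideanSpace ℝ (Fin N) → ℝ)
    (g : EuclideanSpace ℝ (Fin N) → EuclideanSpace ℝ (Fin N))
    (hg : ∀ z, HasGradientAt l (g z) z)
    (hLip : ∀ z w, ‖g z - g w‖ ≤ L * ‖z - w‖)
    (a b : EuclideanSpace ℝ (Fin N)) :
    l a + (inner ℝ (g a) (b - a) : ℝ) - L / 2 * ‖b - a‖ ^ 2 ≤ l b := by
  set d := b - a with hd
  set ψ : ℝ → ℝ := fun t => l (a + t • d) - (inner ℝ (g a) d : ℝ) * t + L / 2 * ‖d‖ ^ 2 * t ^ 2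
    with hψ
  have hψ' : ∀ t : ℝ, HasDerivAt ψ
      ((inner ℝ (g (a + t • d)) d : ℝ) - (inner ℝ (g a) d : ℝ) + L * ‖d‖ ^ 2 * t) t := by
    intro t
    have h1 := line_deriv l g hg a d t
    have h2 : HasDerivAt (fun t : ℝ => (inner ℝ (g a) d : ℝ) * t) (inner ℝ (g a) d : ℝ) t := by
      simpa using (hasDerivAt_id t).const_mul (inner ℝ (g a) d : ℝ)
    have h3 : HasDerivAt (fun t : ℝ => L / 2 * ‖d‖ ^ 2 * t ^ 2) (L * ‖d‖ ^ 2 * t) t := by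
      have := ((hasDerivAt_pow 2 t).const_mul (L / 2 * ‖d‖ ^ 2))
      convert this using 1
      · rfl
      · rfl
      · norm_num
        ring
    exact (h1.sub h2).add h3
  have hmono : MonotoneOn ψ (Set.Icc 0 1) := by
    apply monotoneOn_of_deriv_nonneg (convex_Icc 0 1)
    · exact Continuous.continuousOn (by
        have : Continuous ψ := by
          have : Differentiable ℝ ψ := fun t => (hψ' t).differentiableAt
          exact this.continuous
        exact this)
    · intro t ht
      exact (hψ' t).differentiableAt.differentiableWithinAt
    · intro t ht
      rw [interior_Icc] at ht
      rw [(hψ' t).deriv]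
      have key : -(L * ‖d‖ ^ 2 * t) ≤ (inner ℝ (g (a + t • d)) d : ℝ) - (inner ℝ (g a) d : ℝ) := by
        have h1 : (inner ℝ (g (a + t • d)) d : ℝ) - (inner ℝ (g a) d : ℝ)
            = (inner ℝ (g (a + t • d) - g a) d : ℝ) := by rw [inner_sub_left]
        rw [h1]
        have habs : |(inner ℝ (g (a + t • d) - g a) d : ℝ)| ≤ L * ‖d‖ ^ 2 * t := by
          calc |(inner ℝ (g (a + t • d) - g a) d : ℝ)| ≤ ‖g (a + t • d) - g a‖ * ‖d‖ :=
                abs_real_inner_le_norm _ _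
            _ ≤ L * ‖(a + t • d) - a‖ * ‖d‖ := by
                have := hLip (a + t • d) a
                nlinarith [norm_nonneg d, norm_nonneg (g (a + t • d) - g a)]
            _ = L * ‖d‖ ^ 2 * t := by
                rw [add_sub_cancel_left, norm_smul, Real.norm_eq_abs,
                  abs_of_pos ht.1]
                ring
        linarith [neg_abs_le (inner ℝ (g (a + t • d) - g a) d : ℝ),
          abs_le.1 habs]
      linarith
  have h01 : ψ 0 ≤ ψ 1 := hmono (Set.left_mem_Icc.2 zero_le_one)
    (Set.right_mem_Icc.2 zero_le_one) zero_le_one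
  have hψ0 : ψ 0 = l a := by simp [hψ]
  have hψ1 : ψ 1 = l b - (inner ℝ (g a) d : ℝ) + L / 2 * ‖d‖ ^ 2 := by
    simp [hψ, hd]
  rw [hψ0, hψ1] at h01
  linarith

private lemma convex_grad {N : ℕ} (l : EuclideanSpace ℝ (Fin N) → ℝ)
    (g : EuclideanSpace ℝ (Fin N) → EuclideanSpace ℝ (Fin N))
    (hg : ∀ z, HasGradientAt l (g z) z)
    (hconv : ConvexOn ℝ Set.univ l) (a b : EuclideanSpace ℝ (Fin N)) :
    l a + (inner ℝ (g a) (b - a) : ℝ) ≤ l b := by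
  set d := b - a with hd
  set φ : ℝ → ℝ := fun t => l (a + t • d) with hφ
  have hder : HasDerivAt φ (inner ℝ (g a) d : ℝ) 0 := by
    have := line_deriv l g hg a d 0
    simpa using this
  have htends : Tendsto (fun t => (φ t - φ 0) / t) (nhdsWithin 0 (Set.Ioi 0))
      (nhds (inner ℝ (g a) d : ℝ)) := by
    have := hder.tendsto_slope_zero_right
    simpa [slope_fun_def, φ, div_eq_inv_mul] using this
  have hub : ∀ᶠ t in nhdsWithin (0:ℝ) (Set.Ioi 0), (φ t - φ 0) / t ≤ l b - l a := by
    filter_upwards [Ioo_mem_nhdsGT_of_mem (Set.left_mem_Ico.2 zero_lt_one)] with t ht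
    have hconv' := hconv.2 (Set.mem_univ a) (Set.mem_univ b)
      (by linarith [ht.1, ht.2] : (0:ℝ) ≤ 1 - t) (le_of_lt ht.1) (by ring)
    have heq : (1 - t) • a + t • b = a + t • d := by
      rw [hd]; module
    rw [heq, smul_eq_mul, smul_eq_mul] at hconv'
    have : φ t - φ 0 ≤ t * (l b - l a) := by
      simp only [hφ, zero_smul, add_zero]
      calc l (a + t • d) - l a ≤ (1 - t) * l a + t * l b - l a := by linarith
        _ = t * (l b - l a) := by ring
    rw [div_le_iff₀ ht.1]
    linarith
  have := le_of_tendsto htends hub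
  linarith

/-- Augmented Lagrangian for the ADMM splitting of  min r(x) + l(y)  s.t.  x = y. -/
noncomputable def ALag {N : ℕ} (r l : EuclideanSpace ℝ (Fin N) → ℝ) (del : ℝ)
    (x y u : EuclideanSpace ℝ (Fin N)) : ℝ :=
  r x + l y + del * (inner ℝ u (x - y) : ℝ) + del / 2 * ‖x - y‖ ^ 2

theorem stmt15 {N : ℕ} (L del : ℝ) (hL : 0 < L) (hdel : 0 < del)
    (r l : EuclideanSpace ℝ (Fin N) → ℝ)
    (g : EuclideanSpace ℝ (Fin N) → EuclideanSpace ℝ (Fin N))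
    (hg : ∀ z, HasGradientAt l (g z) z)
    (hLip : ∀ z w, ‖g z - g w‖ ≤ L * ‖z - w‖)
    (x y u : ℕ → EuclideanSpace ℝ (Fin N))
    (hxup : ∀ k, IsMinOn (fun z => r z + del / 2 * ‖z - y k + u k‖ ^ 2) Set.univ (x (k + 1)))
    (hyopt : ∀ k, g (y (k + 1)) + del • (y (k + 1) - x (k + 1) - u k) = 0)
    (huup : ∀ k, u (k + 1) = u k + x (k + 1) - y (k + 1)) :
    (∀ k, 1 ≤ k →
        ALag r l del (x (k + 1)) (y (k + 1)) (u (k + 1)) -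
            ALag r l del (x (k + 1)) (y k) (u k) ≤
          (3 * L / 2 + L ^ 2 / del - del / 2) * ‖y (k + 1) - y k‖ ^ 2) ∧
      (ConvexOn ℝ Set.univ l →
        ∀ k, 1 ≤ k →
          ALag r l del (x (k + 1)) (y (k + 1)) (u (k + 1)) -
              ALag r l del (x (k + 1)) (y k) (u k) ≤
            (L ^ 2 / del - del / 2) * ‖y (k + 1) - y k‖ ^ 2) := by
  have key : ∀ k, 1 ≤ k →
      ALag r l del (x (k + 1)) (y (k + 1)) (u (k + 1)) -
          ALag r l del (x (k + 1)) (y k) (u k) ≤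
        (l (y (k + 1)) - l (y k) - (inner ℝ (g (y (k + 1))) (y (k + 1) - y k) : ℝ)) +
          (L ^ 2 / del - del / 2) * ‖y (k + 1) - y k‖ ^ 2 := by
    intro k hk
    obtain ⟨n, rfl⟩ : ∃ n, k = n + 1 := ⟨k - 1, (Nat.succ_pred_eq_of_pos hk).symm⟩
    set a := x (n + 2)
    set yp := y (n + 2)
    set y0 := y (n + 1)
    set up := u (n + 2)
    set u0 := u (n + 1)
    have h1 : up = u0 + a - yp := huup (n + 1)
    have h2 : g yp = del • up := by
      have h := hyopt (n + 1)
      have h' : g yp = -(del • (yp - a - u0)) := eq_neg_of_add_eq_zero_left h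
      rw [h', h1]; module
    have h3 : g y0 = del • u0 := by
      have h := hyopt n
      have h' : g y0 = -(del • (y0 - x (n + 1) - u n)) := eq_neg_of_add_eq_zero_left h
      have h4 : u0 = u n + x (n + 1) - y0 := huup n
      rw [h', h4]; module
    set e := up - u0 with he
    set dv := yp - y0 with hdv
    have ha : a = yp + e := by rw [he, h1]; module
    have hEq : ALag r l del a yp up - ALag r l del a y0 u0 =
        (l yp - l y0 - (inner ℝ (g yp) dv : ℝ)) + del * ‖e‖ ^ 2 - del / 2 * ‖dv‖ ^ 2 := by
      have hup : up = u0 + e := by rw [he]; module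
      have hip : (inner ℝ (g yp) dv : ℝ) = del * (inner ℝ up dv : ℝ) := by
        rw [h2, real_inner_smul_left]
      have hay0 : a - y0 = e + dv := by rw [ha, hdv]; module
      have hayp : a - yp = e := by rw [ha]; module
      simp only [ALag, hip, hay0, hayp, hup]
      rw [norm_add_sq_real]
      simp only [inner_add_left, inner_add_right, real_inner_self_eq_norm_sq]
      ring
    have hdu : del * ‖e‖ ≤ L * ‖dv‖ := by
      have hde : del • e = g yp - g y0 := by rw [h2, h3, he]; module
      have : ‖del • e‖ = del * ‖e‖ := by
        rw [norm_smul, Real.norm_eq_abs, abs_of_pos hdel]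
      calc del * ‖e‖ = ‖del • e‖ := this.symm
        _ = ‖g yp - g y0‖ := by rw [hde]
        _ ≤ L * ‖yp - y0‖ := hLip yp y0
    have hesq : del * ‖e‖ ^ 2 ≤ L ^ 2 / del * ‖dv‖ ^ 2 := by
      have h0 : 0 ≤ ‖e‖ := norm_nonneg e
      have h1' : 0 ≤ ‖dv‖ := norm_nonneg dv
      have hsq : (del * ‖e‖) ^ 2 ≤ (L * ‖dv‖) ^ 2 := by
        apply sq_le_sq' _ hdu
        nlinarith
      rw [div_mul_eq_mul_div, le_div_iff₀ hdel]
      nlinarith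
    rw [hEq]
    linarith
  constructor
  · intro k hk
    have hA := descent_lemma L (le_of_lt hL) l g hg hLip (y (k + 1)) (y k)
    have hAs : l (y (k + 1)) - l (y k) - (inner ℝ (g (y (k + 1))) (y (k + 1) - y k) : ℝ)
        ≤ L / 2 * ‖y (k + 1) - y k‖ ^ 2 := by
      have h1 : (inner ℝ (g (y (k + 1))) (y k - y (k + 1)) : ℝ)
          = -(inner ℝ (g (y (k + 1))) (y (k + 1) - y k) : ℝ) := by
        rw [← inner_neg_right]; congr 1; module
      have h2 : ‖y k - y (k + 1)‖ = ‖y (k + 1) - y k‖ := norm_sub_rev _ _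
      rw [h1, h2] at hA
      linarith
    have := key k hk
    have hn : 0 ≤ ‖y (k + 1) - y k‖ ^ 2 := sq_nonneg _
    nlinarith
  · intro hconv k hk
    have hA := convex_grad l g hg hconv (y (k + 1)) (y k)
    have hAs : l (y (k + 1)) - l (y k) - (inner ℝ (g (y (k + 1))) (y (k + 1) - y k) : ℝ) ≤ 0 := by
      have h1 : (inner ℝ (g (y (k + 1))) (y k - y (k + 1)) : ℝ)
          = -(inner ℝ (g (y (k + 1))) (y (k + 1) - y k) : ℝ) := by
        rw [← inner_neg_right]; congr 1; module
      rw [h1] at hA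
      linarith
    have := key k hk
    linarith
end
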